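/- Let γ₁,γ₂,ρ₁,ρ₂ ∈ (0,1] with γ₁+ρ₁ > 1 and γ₂+ρ₂ > 1, and let f,g : [0,1]² → ℝ be continuous with 𝒩_{γ₁,γ₂}(f) < ∞ and 𝒩_{ρ₁,ρ₂}(g) < ∞. Then for every rectangle [s,s′]×[t,t′] ⊆ [0,1]² the two-dimensional Young Riemann sums S_Π = Σ_{i,j} f(σ_i,τ_j)·(δg)(σ_i,σ_{i+1};τ_j,τ_{j+1}) over grid partitions Π of [s,s′]×[t,t′] converge to a finite limit as |Π| → 0 (this limit defines the two-dimensional Young integral ∬_{[s,s′]×[t,t′]} f dg). -/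

import Mathlib

open Set

/-- Rectangular increment `(δf)(s₁,s₂;t₁,t₂)`. -/
def dd (f : ℝ → ℝ → ℝ) (s₁ s₂ t₁ t₂ : ℝ) : ℝ :=
  f s₂ t₂ - f s₁ t₂ - f s₂ t₁ + f s₁ t₁

/-- Increment in the first direction `(δ₁f)(s₁,s₂;t)`. -/
def d1 (f : ℝ → ℝ → ℝ) (s₁ s₂ t : ℝ) : ℝ := f s₂ t - f s₁ t

/-- Increment in the second direction `(δ₂f)(s;t₁,t₂)`. -/
def d2 (f : ℝ → ℝ → ℝ) (s t₁ t₂ : ℝ) : ℝ := f s t₂ - f s t₁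

/-- `σ` is a grid of `[a,b]` with `m` subintervals. -/
def IsGrid (a b : ℝ) (m : ℕ) (σ : ℕ → ℝ) : Prop :=
  σ 0 = a ∧ σ m = b ∧ ∀ i < m, σ i < σ (i + 1)

/-- The mesh of the grid `σ` is at most `η`. -/
def MeshLE (m : ℕ) (σ : ℕ → ℝ) (η : ℝ) : Prop :=
  ∀ i < m, σ (i + 1) - σ i ≤ η

/-- Convergence of two-dimensional Riemann sums with local summand
`F σᵢ σᵢ₊₁ τⱼ τⱼ₊₁` over grid partitions of `[s,s']×[t,t']` to the limit `L`. -/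
def RConv (s s' t t' : ℝ) (F : ℝ → ℝ → ℝ → ℝ → ℝ) (L : ℝ) : Prop :=
  ∀ ε > (0:ℝ), ∃ η > (0:ℝ), ∀ (m n : ℕ) (σ τ : ℕ → ℝ),
    IsGrid s s' m σ → IsGrid t t' n τ → MeshLE m σ η → MeshLE n τ η →
    |(∑ i ∈ Finset.range m, ∑ j ∈ Finset.range n,
        F (σ i) (σ (i + 1)) (τ j) (τ (j + 1))) - L| ≤ ε

/-- `𝒩_{ρ₁,ρ₂}(f) < ∞` on `[0,1]²`. -/
def NFin (ρ₁ ρ₂ : ℝ) (f : ℝ → ℝ → ℝ) : Prop :=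
  ∃ C : ℝ,
    (∀ s₁ s₂ t₁ t₂ : ℝ, s₁ ∈ Icc (0:ℝ) 1 → s₂ ∈ Icc (0:ℝ) 1 →
      t₁ ∈ Icc (0:ℝ) 1 → t₂ ∈ Icc (0:ℝ) 1 →
      |dd f s₁ s₂ t₁ t₂| ≤ C * |s₂ - s₁| ^ ρ₁ * |t₂ - t₁| ^ ρ₂) ∧
    (∀ s₁ s₂ t : ℝ, s₁ ∈ Icc (0:ℝ) 1 → s₂ ∈ Icc (0:ℝ) 1 → t ∈ Icc (0:ℝ) 1 →
      |d1 f s₁ s₂ t| ≤ C * |s₂ - s₁| ^ ρ₁) ∧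
    (∀ s t₁ t₂ : ℝ, s ∈ Icc (0:ℝ) 1 → t₁ ∈ Icc (0:ℝ) 1 → t₂ ∈ Icc (0:ℝ) 1 →
      |d2 f s t₁ t₂| ≤ C * |t₂ - t₁| ^ ρ₂) ∧
    (∀ s t : ℝ, s ∈ Icc (0:ℝ) 1 → t ∈ Icc (0:ℝ) 1 → |f s t| ≤ C)

section YoungAux

open Finset

noncomputable def Zc (θ : ℝ) : ℝ := ∑' n : ℕ, (1 / ((n : ℝ) + 1)) ^ θ

lemma Zc_summable {θ : ℝ} (hθ : 1 < θ) : Summable (fun n : ℕ => (1 / ((n : ℝ) + 1)) ^ θ) := by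
  have h := (summable_nat_add_iff (f := fun n : ℕ => 1 / (n : ℝ) ^ θ) 1).2
    (Real.summable_one_div_nat_rpow.2 hθ)
  refine h.congr fun n => ?_
  push_cast
  rw [one_div, one_div, Real.inv_rpow (by positivity)]

lemma Zc_nonneg (θ : ℝ) : 0 ≤ Zc θ := tsum_nonneg fun n => by positivity

lemma sum_le_Zc {θ : ℝ} (hθ : 1 < θ) (N : ℕ) :
    ∑ k ∈ range N, (1 / ((k : ℝ) + 1)) ^ θ ≤ Zc θ :=
  Summable.sum_le_tsum _ (fun i _ => by positivity) (Zc_summable hθ)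

lemma grid_mono {a b : ℝ} {m : ℕ} {σ : ℕ → ℝ} (h : IsGrid a b m σ) :
    ∀ {i j : ℕ}, i ≤ j → j ≤ m → σ i ≤ σ j := by
  intro i j hij hjm
  induction j with
  | zero => simp_all
  | succ k ih =>
    rcases Nat.eq_or_lt_of_le hij with heq | hlt
    · exact heq ▸ le_rfl
    · exact le_trans (ih (Nat.lt_succ_iff.1 hlt) (le_trans (Nat.le_succ k) hjm))
        (le_of_lt (h.2.2 k (Nat.lt_of_succ_le hjm)))

lemma grid_mem {a b : ℝ} {m : ℕ} {σ : ℕ → ℝ} (h : IsGrid a b m σ) {i : ℕ} (hi : i ≤ m) :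
    a ≤ σ i ∧ σ i ≤ b :=
  ⟨h.1 ▸ grid_mono h (Nat.zero_le i) hi, h.2.1 ▸ grid_mono h hi le_rfl⟩

lemma grid_le {a b : ℝ} {m : ℕ} {σ : ℕ → ℝ} (h : IsGrid a b m σ) : a ≤ b := by
  have := grid_mem h (le_refl m); rw [h.2.1] at this; exact this.1

lemma asl_aux {θ C a b : ℝ} {H : ℝ → ℝ → ℝ} (hθ : 1 < θ) (hC : 0 ≤ C)
    (hH : ∀ x y z : ℝ, a ≤ x → x ≤ y → y ≤ z → z ≤ b →
      |H x z - H x y - H y z| ≤ C * (z - x) ^ θ) :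
    ∀ n : ℕ, ∀ σ : ℕ → ℝ, IsGrid a b n σ →
      |(∑ i ∈ range n, H (σ i) (σ (i + 1))) - H a b| ≤
        C * (2 * (b - a)) ^ θ * ∑ k ∈ range (n - 1), (1 / ((k : ℝ) + 1)) ^ θ := by
  intro n
  induction n using Nat.strong_induction_on with
  | _ n ih =>
    rcases n with _ | _ | n
    · intro σ hσ
      have hab : a = b := hσ.1 ▸ hσ.2.1 ▸ rfl
      have h0 : |H a b| ≤ C * (b - b) ^ θ := by
        have := hH b b b (le_of_eq hab) le_rfl le_rfl le_rfl
        simpa [hab] using this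
      rw [sub_self, Real.zero_rpow (ne_of_gt (by linarith)), mul_zero] at h0
      simp only [Finset.range_zero, Finset.sum_empty, zero_sub, abs_neg, Nat.zero_sub]
      exact h0.trans (le_of_eq (mul_zero _).symm)
    · intro σ hσ
      have e : ∑ i ∈ Finset.range 1, H (σ i) (σ (i + 1)) = H a b := by
        rw [Finset.sum_range_one, show σ 0 = a from hσ.1, show σ (0 + 1) = b from hσ.2.1]
      rw [e, sub_self, abs_zero]
      have hab : a ≤ b := grid_le hσ
      exact mul_nonneg (mul_nonneg hC (Real.rpow_nonneg (by linarith) θ))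
        (Finset.sum_nonneg fun k _ => by positivity)
    · intro σ hσ
      set N := n + 1 with hN
      -- choose a removable point k with σ (k+2) - σ k ≤ 2 (b-a) / N
      have hab : a ≤ b := grid_le hσ
      have hsum : ∑ k ∈ range N, (σ (k + 2) - σ k) ≤ ∑ k ∈ range N, 2 * (b - a) / N := by
        have e1 : ∑ k ∈ range N, (σ (k + 2) - σ k)
            = (σ (N + 1) - σ 1) + (σ N - σ 0) := by
          have t1 : ∑ k ∈ range N, (σ (k + 2) - σ (k + 1)) = σ (N + 1) - σ 1 :=
            Finset.sum_range_sub (fun i => σ (i + 1)) N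
          have t2 : ∑ k ∈ range N, (σ (k + 1) - σ k) = σ N - σ 0 :=
            Finset.sum_range_sub σ N
          rw [← t1, ← t2, ← Finset.sum_add_distrib]
          apply Finset.sum_congr rfl; intro k _; ring
        have hb1 : σ (N + 1) - σ 1 ≤ b - a := by
          have := (grid_mem hσ (i := 1) (by omega)).1
          have := (grid_mem hσ (i := N + 1) (by omega)).2
          linarith
        have hb2 : σ N - σ 0 ≤ b - a := by
          have := (grid_mem hσ (i := 0) (by omega)).1
          have := (grid_mem hσ (i := N) (by omega)).2
          linarith
        rw [e1, Finset.sum_const, card_range, nsmul_eq_mul]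
        have : (N : ℝ) * (2 * (b - a) / N) = 2 * (b - a) := by
          have hN0 : (N:ℝ) ≠ 0 := by positivity
          field_simp
        rw [this]; linarith
      obtain ⟨k, hk, hkle⟩ := Finset.exists_le_of_sum_le ⟨0, Finset.mem_range.2 (by omega)⟩ hsum
      rw [Finset.mem_range] at hk
      -- removed grid
      set σ' : ℕ → ℝ := fun i => if i < k + 1 then σ i else σ (i + 1) with hσ'
      have hk1N : k + 1 ≤ N := by omega
      have hgrid' : IsGrid a b N σ' := by
        refine ⟨?_, ?_, ?_⟩
        · have : (0:ℕ) < k + 1 := by omega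
          simp only [hσ', if_pos this]; exact hσ.1
        · have : ¬ (N < k + 1) := by omega
          simp only [hσ', if_neg this]; exact hσ.2.1
        · intro i hi
          by_cases h1 : i + 1 < k + 1
          · have h2 : i < k + 1 := by omega
            simp only [hσ', if_pos h1, if_pos h2]
            exact hσ.2.2 i (by omega)
          · by_cases h2 : i < k + 1
            · have hik : i = k := by omega
              subst hik
              simp only [hσ']
              rw [if_pos (show i < i + 1 by omega), if_neg (show ¬ (i + 1 < i + 1) by omega)]
              exact lt_trans (hσ.2.2 i (by omega)) (hσ.2.2 (i + 1) (by omega))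
            · simp only [hσ', if_neg h1, if_neg h2]
              exact hσ.2.2 (i + 1) (by omega)
      set r := N - k - 1 with hr
      have hNr : N = k + 1 + r := by omega
      have hsum_id : ∑ i ∈ Finset.range N, H (σ' i) (σ' (i + 1))
          = (∑ i ∈ Finset.range (N + 1), H (σ i) (σ (i + 1)))
            - H (σ k) (σ (k + 1)) - H (σ (k + 1)) (σ (k + 2)) + H (σ k) (σ (k + 2)) := by
        have congr1 : ∀ i ∈ Finset.range k, H (σ' i) (σ' (i + 1)) = H (σ i) (σ (i + 1)) := by
          intro i hi
          rw [Finset.mem_range] at hi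
          have h1 : i < k + 1 := by omega
          have h2 : i + 1 < k + 1 := by omega
          simp only [hσ', if_pos h1, if_pos h2]
        have lhs_split : ∑ i ∈ Finset.range N, H (σ' i) (σ' (i + 1))
            = (∑ i ∈ Finset.range k, H (σ i) (σ (i + 1))) + H (σ k) (σ (k + 2))
              + ∑ i ∈ Finset.range r, H (σ (k + 2 + i)) (σ (k + 3 + i)) := by
          rw [hNr, Finset.sum_range_add (fun i => H (σ' i) (σ' (i + 1))) (k + 1) r,
            Finset.sum_range_succ]
          have e1 : H (σ' k) (σ' (k + 1)) = H (σ k) (σ (k + 2)) := by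
            have h1 : k < k + 1 := by omega
            have h2 : ¬ (k + 1 < k + 1) := by omega
            simp only [hσ', if_pos h1, if_neg h2]
          have e2 : ∀ i ∈ Finset.range r,
              H (σ' (k + 1 + i)) (σ' (k + 1 + i + 1)) = H (σ (k + 2 + i)) (σ (k + 3 + i)) := by
            intro i _
            have h1 : ¬ (k + 1 + i < k + 1) := by omega
            have h2 : ¬ (k + 1 + i + 1 < k + 1) := by omega
            simp only [hσ', if_neg h1, if_neg h2]
            have a2 : k + 1 + i + 1 + 1 = k + 3 + i := by omega
            have a1 : k + 1 + i + 1 = k + 2 + i := by omega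
            rw [a2, a1]
          rw [Finset.sum_congr rfl congr1, Finset.sum_congr rfl e2, e1]
        have rhs_split : ∑ i ∈ Finset.range (N + 1), H (σ i) (σ (i + 1))
            = (∑ i ∈ Finset.range k, H (σ i) (σ (i + 1))) + H (σ k) (σ (k + 1))
              + H (σ (k + 1)) (σ (k + 2))
              + ∑ i ∈ Finset.range r, H (σ (k + 2 + i)) (σ (k + 3 + i)) := by
          have hN1 : N + 1 = k + 2 + r := by omega
          rw [hN1, Finset.sum_range_add (fun i => H (σ i) (σ (i + 1))) (k + 2) r,
            Finset.sum_range_succ, Finset.sum_range_succ]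
          have e2 : ∀ i ∈ Finset.range r,
              H (σ (k + 2 + i)) (σ (k + 2 + i + 1)) = H (σ (k + 2 + i)) (σ (k + 3 + i)) := by
            intro i _
            have a1 : k + 2 + i + 1 = k + 3 + i := by omega
            rw [a1]
          rw [Finset.sum_congr rfl e2]
        rw [lhs_split, rhs_split]
        ring
      -- the removal estimate
      have hmem0 := grid_mem hσ (i := k) (by omega)
      have hmem1 := grid_mem hσ (i := k + 1) (by omega)
      have hmem2 := grid_mem hσ (i := k + 2) (by omega)
      have hle01 : σ k ≤ σ (k + 1) := grid_mono hσ (by omega) (by omega)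
      have hle12 : σ (k + 1) ≤ σ (k + 2) := grid_mono hσ (by omega) (by omega)
      have hrm : |H (σ k) (σ (k + 2)) - H (σ k) (σ (k + 1)) - H (σ (k + 1)) (σ (k + 2))|
          ≤ C * ((2 * (b - a)) ^ θ * (1 / ((N : ℝ))) ^ θ) := by
        refine (hH (σ k) (σ (k + 1)) (σ (k + 2)) hmem0.1 hle01 hle12 hmem2.2).trans ?_
        have hbase : (0:ℝ) ≤ σ (k + 2) - σ k := by linarith
        have hNpos : (0:ℝ) < (N : ℝ) := by positivity
        have h2ba : (0:ℝ) ≤ 2 * (b - a) := by linarith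
        have : (σ (k + 2) - σ k) ^ θ ≤ (2 * (b - a) / N) ^ θ :=
          Real.rpow_le_rpow hbase hkle (by linarith)
        have e : (2 * (b - a) / (N:ℝ)) ^ θ = (2 * (b - a)) ^ θ * (1 / ((N:ℝ))) ^ θ := by
          rw [← Real.mul_rpow h2ba (by positivity)]
          congr 1
          field_simp
        rw [e] at this
        exact mul_le_mul_of_nonneg_left this hC
      have ihh := ih N (by omega) σ' hgrid'
      have hsplitsum : ∑ j ∈ Finset.range (N + 1 - 1), (1 / ((j : ℝ) + 1)) ^ θ
          = (∑ j ∈ Finset.range (N - 1), (1 / ((j : ℝ) + 1)) ^ θ) + (1 / ((N : ℝ))) ^ θ := by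
        have hN1 : N + 1 - 1 = (N - 1) + 1 := by omega
        rw [hN1, Finset.sum_range_succ]
        congr 2
        have : ((N - 1 : ℕ) : ℝ) = (N : ℝ) - 1 := by
          have : (1:ℕ) ≤ N := by omega
          push_cast [this]
          ring
        rw [this]
        ring
      have habs : |∑ i ∈ Finset.range (N + 1), H (σ i) (σ (i + 1)) - H a b|
          ≤ |H (σ k) (σ (k + 2)) - H (σ k) (σ (k + 1)) - H (σ (k + 1)) (σ (k + 2))|
            + |∑ i ∈ Finset.range N, H (σ' i) (σ' (i + 1)) - H a b| := by
        have idt : ∑ i ∈ Finset.range (N + 1), H (σ i) (σ (i + 1)) - H a b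
            = -(H (σ k) (σ (k + 2)) - H (σ k) (σ (k + 1)) - H (σ (k + 1)) (σ (k + 2)))
              + (∑ i ∈ Finset.range N, H (σ' i) (σ' (i + 1)) - H a b) := by
          rw [hsum_id]; ring
        rw [idt]
        exact (abs_add_le _ _).trans (by rw [abs_neg])
      rw [hsplitsum, mul_add]
      calc |∑ i ∈ Finset.range (N + 1), H (σ i) (σ (i + 1)) - H a b|
          ≤ C * ((2 * (b - a)) ^ θ * (1 / ((N : ℝ))) ^ θ)
            + C * (2 * (b - a)) ^ θ * ∑ j ∈ Finset.range (N - 1), (1 / ((j : ℝ) + 1)) ^ θ :=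
            habs.trans (add_le_add hrm ihh)
        _ = C * (2 * (b - a)) ^ θ * ∑ j ∈ Finset.range (N - 1), (1 / ((j : ℝ) + 1)) ^ θ
            + C * (2 * (b - a)) ^ θ * (1 / ((N : ℝ))) ^ θ := by ring

lemma rpow_prod_le {x y z γ ρ : ℝ} (hxy : x ≤ y) (hyz : y ≤ z) (hγ : 0 < γ) (hρ : 0 < ρ) :
    (y - x) ^ γ * (z - y) ^ ρ ≤ (z - x) ^ (γ + ρ) := by
  have h1 : (0:ℝ) ≤ y - x := by linarith
  have h2 : (0:ℝ) ≤ z - y := by linarith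
  have h3 : (0:ℝ) ≤ z - x := by linarith
  calc (y - x) ^ γ * (z - y) ^ ρ ≤ (z - x) ^ γ * (z - x) ^ ρ := by
        apply mul_le_mul (Real.rpow_le_rpow h1 (by linarith) hγ.le)
          (Real.rpow_le_rpow h2 (by linarith) hρ.le) (by positivity) (by positivity)
    _ = (z - x) ^ (γ + ρ) := (Real.rpow_add_of_nonneg h3 hγ.le hρ.le).symm

lemma asl {θ C a b : ℝ} {H : ℝ → ℝ → ℝ} (hθ : 1 < θ) (hC : 0 ≤ C)
    (hH : ∀ x y z : ℝ, a ≤ x → x ≤ y → y ≤ z → z ≤ b →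
      |H x z - H x y - H y z| ≤ C * (z - x) ^ θ)
    {n : ℕ} {σ : ℕ → ℝ} (hσ : IsGrid a b n σ) :
    |(∑ i ∈ Finset.range n, H (σ i) (σ (i + 1))) - H a b| ≤
      C * (2 * (b - a)) ^ θ * Zc θ := by
  refine (asl_aux hθ hC hH n σ hσ).trans ?_
  have h0 : 0 ≤ C * (2 * (b - a)) ^ θ :=
    mul_nonneg hC (Real.rpow_nonneg (by linarith [grid_le hσ]) θ)
  rw [mul_assoc, mul_assoc]
  exact mul_le_mul_of_nonneg_left
    (mul_le_mul_of_nonneg_left (sum_le_Zc hθ _) (Real.rpow_nonneg (by linarith [grid_le hσ]) θ)) hC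

lemma y1 {γ ρ A B c d : ℝ} {F G : ℝ → ℝ} (hγ : 0 < γ) (hρ : 0 < ρ) (hθ : 1 < γ + ρ)
    (hA : 0 ≤ A) (hB : 0 ≤ B)
    (hF : ∀ u v : ℝ, c ≤ u → u ≤ v → v ≤ d → |F v - F u| ≤ A * (v - u) ^ γ)
    (hG : ∀ u v : ℝ, c ≤ u → u ≤ v → v ≤ d → |G v - G u| ≤ B * (v - u) ^ ρ)
    {n : ℕ} {τ : ℕ → ℝ} (hτ : IsGrid c d n τ) :
    |(∑ j ∈ Finset.range n, F (τ j) * (G (τ (j + 1)) - G (τ j))) - F c * (G d - G c)| ≤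
      A * B * (2 * (d - c)) ^ (γ + ρ) * Zc (γ + ρ) := by
  have key := asl (H := fun x y => F x * (G y - G x)) hθ (mul_nonneg hA hB) ?_ hτ
  · exact key.trans (le_of_eq (by ring))
  · intro x y z hx hxy hyz hz
    have e : F x * (G z - G x) - F x * (G y - G x) - F y * (G z - G y)
        = (F x - F y) * (G z - G y) := by ring
    rw [e, abs_mul]
    calc |F x - F y| * |G z - G y|
        ≤ (A * (y - x) ^ γ) * (B * (z - y) ^ ρ) := by
          apply mul_le_mul _ (hG y z (le_trans hx hxy) hyz hz) (abs_nonneg _)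
            (mul_nonneg hA (Real.rpow_nonneg (by linarith) γ))
          rw [abs_sub_comm]
          exact hF x y hx hxy (le_trans hyz hz)
      _ = A * B * ((y - x) ^ γ * (z - y) ^ ρ) := by ring
      _ ≤ A * B * (z - x) ^ (γ + ρ) :=
          mul_le_mul_of_nonneg_left (rpow_prod_le hxy hyz hγ hρ) (mul_nonneg hA hB)

lemma stage1 {γ₁ γ₂ ρ₁ ρ₂ Cf Cg : ℝ} {f g : ℝ → ℝ → ℝ}
    (hγ₁ : 0 < γ₁) (hγ₂ : 0 < γ₂) (hρ₁ : 0 < ρ₁) (hρ₂ : 0 < ρ₂) (hθ₂ : 1 < γ₂ + ρ₂)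
    (hCf : 0 ≤ Cf) (hCg : 0 ≤ Cg)
    (hfdd : ∀ s₁ s₂ t₁ t₂ : ℝ, s₁ ∈ Set.Icc (0:ℝ) 1 → s₂ ∈ Set.Icc (0:ℝ) 1 →
      t₁ ∈ Set.Icc (0:ℝ) 1 → t₂ ∈ Set.Icc (0:ℝ) 1 →
      |dd f s₁ s₂ t₁ t₂| ≤ Cf * |s₂ - s₁| ^ γ₁ * |t₂ - t₁| ^ γ₂)
    (hfd1 : ∀ s₁ s₂ t : ℝ, s₁ ∈ Set.Icc (0:ℝ) 1 → s₂ ∈ Set.Icc (0:ℝ) 1 →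
      t ∈ Set.Icc (0:ℝ) 1 → |d1 f s₁ s₂ t| ≤ Cf * |s₂ - s₁| ^ γ₁)
    (hgdd : ∀ s₁ s₂ t₁ t₂ : ℝ, s₁ ∈ Set.Icc (0:ℝ) 1 → s₂ ∈ Set.Icc (0:ℝ) 1 →
      t₁ ∈ Set.Icc (0:ℝ) 1 → t₂ ∈ Set.Icc (0:ℝ) 1 →
      |dd g s₁ s₂ t₁ t₂| ≤ Cg * |s₂ - s₁| ^ ρ₁ * |t₂ - t₁| ^ ρ₂)
    {t t' : ℝ} (ht : 0 ≤ t) (ht1 : t' ≤ 1)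
    {n : ℕ} {τ : ℕ → ℝ} (hτ : IsGrid t t' n τ)
    {x y z : ℝ} (hx : 0 ≤ x) (hxy : x ≤ y) (hyz : y ≤ z) (hz1 : z ≤ 1) :
    |(∑ j ∈ Finset.range n, f x (τ j) * dd g x z (τ j) (τ (j + 1)))
        - (∑ j ∈ Finset.range n, f x (τ j) * dd g x y (τ j) (τ (j + 1)))
        - (∑ j ∈ Finset.range n, f y (τ j) * dd g y z (τ j) (τ (j + 1)))|
      ≤ (Cf * Cg * ((2:ℝ) ^ (γ₂ + ρ₂) * Zc (γ₂ + ρ₂) + 1)) * (z - x) ^ (γ₁ + ρ₁) := by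
  have htt' : t ≤ t' := grid_le hτ
  set F : ℝ → ℝ := fun u => f x u - f y u with hF
  set G : ℝ → ℝ := fun u => g z u - g y u with hG
  have main : (∑ j ∈ Finset.range n, f x (τ j) * dd g x z (τ j) (τ (j + 1)))
        - (∑ j ∈ Finset.range n, f x (τ j) * dd g x y (τ j) (τ (j + 1)))
        - (∑ j ∈ Finset.range n, f y (τ j) * dd g y z (τ j) (τ (j + 1)))
      = ∑ j ∈ Finset.range n, F (τ j) * (G (τ (j + 1)) - G (τ j)) := by
    rw [← Finset.sum_sub_distrib, ← Finset.sum_sub_distrib]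
    refine Finset.sum_congr rfl fun j _ => ?_
    simp only [hF, hG, dd]
    ring
  rw [main]
  have hA : (0:ℝ) ≤ Cf * (y - x) ^ γ₁ := mul_nonneg hCf (Real.rpow_nonneg (by linarith) _)
  have hB : (0:ℝ) ≤ Cg * (z - y) ^ ρ₁ := mul_nonneg hCg (Real.rpow_nonneg (by linarith) _)
  have hmemx : x ∈ Set.Icc (0:ℝ) 1 := ⟨hx, by linarith⟩
  have hmemy : y ∈ Set.Icc (0:ℝ) 1 := ⟨by linarith, by linarith⟩
  have hmemz : z ∈ Set.Icc (0:ℝ) 1 := ⟨by linarith, hz1⟩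
  have hFb : ∀ u v : ℝ, t ≤ u → u ≤ v → v ≤ t' →
      |F v - F u| ≤ (Cf * (y - x) ^ γ₁) * (v - u) ^ γ₂ := by
    intro u v h1 h2 h3
    have hmu : u ∈ Set.Icc (0:ℝ) 1 := ⟨by linarith, by linarith⟩
    have hmv : v ∈ Set.Icc (0:ℝ) 1 := ⟨by linarith, by linarith⟩
    have e : F v - F u = dd f y x u v := by simp only [hF, dd]; ring
    rw [e]
    calc |dd f y x u v| ≤ Cf * |x - y| ^ γ₁ * |v - u| ^ γ₂ := hfdd y x u v hmemy hmemx hmu hmv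
      _ = (Cf * (y - x) ^ γ₁) * (v - u) ^ γ₂ := by
          rw [abs_sub_comm x y, abs_of_nonneg (by linarith : (0:ℝ) ≤ y - x),
            abs_of_nonneg (by linarith : (0:ℝ) ≤ v - u)]
  have hGb : ∀ u v : ℝ, t ≤ u → u ≤ v → v ≤ t' →
      |G v - G u| ≤ (Cg * (z - y) ^ ρ₁) * (v - u) ^ ρ₂ := by
    intro u v h1 h2 h3
    have hmu : u ∈ Set.Icc (0:ℝ) 1 := ⟨by linarith, by linarith⟩
    have hmv : v ∈ Set.Icc (0:ℝ) 1 := ⟨by linarith, by linarith⟩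
    have e : G v - G u = dd g y z u v := by simp only [hG, dd]; ring
    rw [e]
    calc |dd g y z u v| ≤ Cg * |z - y| ^ ρ₁ * |v - u| ^ ρ₂ := hgdd y z u v hmemy hmemz hmu hmv
      _ = (Cg * (z - y) ^ ρ₁) * (v - u) ^ ρ₂ := by
          rw [abs_of_nonneg (by linarith : (0:ℝ) ≤ z - y),
            abs_of_nonneg (by linarith : (0:ℝ) ≤ v - u)]
  have key := y1 hγ₂ hρ₂ hθ₂ hA hB hFb hGb hτ
  have hmemt : t ∈ Set.Icc (0:ℝ) 1 := ⟨ht, by linarith⟩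
  have hmemt' : t' ∈ Set.Icc (0:ℝ) 1 := ⟨by linarith, ht1⟩
  have head : |F t * (G t' - G t)| ≤ (Cf * (y - x) ^ γ₁) * (Cg * (z - y) ^ ρ₁) := by
    rw [abs_mul]
    have h1 : |F t| ≤ Cf * (y - x) ^ γ₁ := by
      have e : F t = d1 f y x t := by simp only [hF, d1]
      rw [e]
      calc |d1 f y x t| ≤ Cf * |x - y| ^ γ₁ := hfd1 y x t hmemy hmemx hmemt
        _ = Cf * (y - x) ^ γ₁ := by
            rw [abs_sub_comm x y, abs_of_nonneg (by linarith : (0:ℝ) ≤ y - x)]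
    have h2 : |G t' - G t| ≤ Cg * (z - y) ^ ρ₁ := by
      refine (hGb t t' le_rfl htt' le_rfl).trans ?_
      have : (t' - t) ^ ρ₂ ≤ 1 := Real.rpow_le_one (by linarith) (by linarith) hρ₂.le
      nlinarith [hB]
    exact mul_le_mul h1 h2 (abs_nonneg _) hA
  have h2le : (2 * (t' - t)) ^ (γ₂ + ρ₂) ≤ (2:ℝ) ^ (γ₂ + ρ₂) :=
    Real.rpow_le_rpow (by linarith) (by linarith) (by linarith)
  have hABn : (0:ℝ) ≤ (Cf * (y - x) ^ γ₁) * (Cg * (z - y) ^ ρ₁) := mul_nonneg hA hB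
  have hZn := Zc_nonneg (γ₂ + ρ₂)
  calc |∑ j ∈ Finset.range n, F (τ j) * (G (τ (j + 1)) - G (τ j))|
      = |(∑ j ∈ Finset.range n, F (τ j) * (G (τ (j + 1)) - G (τ j)) - F t * (G t' - G t))
          + F t * (G t' - G t)| := by rw [sub_add_cancel]
    _ ≤ |∑ j ∈ Finset.range n, F (τ j) * (G (τ (j + 1)) - G (τ j)) - F t * (G t' - G t)|
          + |F t * (G t' - G t)| := abs_add_le _ _
    _ ≤ (Cf * (y - x) ^ γ₁) * (Cg * (z - y) ^ ρ₁) * (2 * (t' - t)) ^ (γ₂ + ρ₂) * Zc (γ₂ + ρ₂)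
          + (Cf * (y - x) ^ γ₁) * (Cg * (z - y) ^ ρ₁) := add_le_add key head
    _ ≤ (Cf * (y - x) ^ γ₁) * (Cg * (z - y) ^ ρ₁) * (2:ℝ) ^ (γ₂ + ρ₂) * Zc (γ₂ + ρ₂)
          + (Cf * (y - x) ^ γ₁) * (Cg * (z - y) ^ ρ₁) := by
        have h' : Cf * (y - x) ^ γ₁ * (Cg * (z - y) ^ ρ₁) * (2 * (t' - t)) ^ (γ₂ + ρ₂) * Zc (γ₂ + ρ₂)
            ≤ Cf * (y - x) ^ γ₁ * (Cg * (z - y) ^ ρ₁) * (2:ℝ) ^ (γ₂ + ρ₂) * Zc (γ₂ + ρ₂) := by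
          rw [mul_assoc (Cf * (y - x) ^ γ₁ * (Cg * (z - y) ^ ρ₁)),
            mul_assoc (Cf * (y - x) ^ γ₁ * (Cg * (z - y) ^ ρ₁))]
          exact mul_le_mul_of_nonneg_left (mul_le_mul_of_nonneg_right h2le hZn) hABn
        linarith
    _ = (Cf * Cg) * ((2:ℝ) ^ (γ₂ + ρ₂) * Zc (γ₂ + ρ₂) + 1) * ((y - x) ^ γ₁ * (z - y) ^ ρ₁) := by
        ring
    _ ≤ (Cf * Cg) * ((2:ℝ) ^ (γ₂ + ρ₂) * Zc (γ₂ + ρ₂) + 1) * (z - x) ^ (γ₁ + ρ₁) := by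
        refine mul_le_mul_of_nonneg_left (rpow_prod_le hxy hyz hγ₁ hρ₁) ?_
        have : (0:ℝ) ≤ (2:ℝ) ^ (γ₂ + ρ₂) * Zc (γ₂ + ρ₂) := by positivity
        exact mul_nonneg (mul_nonneg hCf hCg) (by linarith)
    _ = (Cf * Cg * ((2:ℝ) ^ (γ₂ + ρ₂) * Zc (γ₂ + ρ₂) + 1)) * (z - x) ^ (γ₁ + ρ₁) := by ring

lemma sum_blocks {h : ℕ → ℝ} {p : ℕ → ℕ} :
    ∀ m : ℕ, (∀ i < m, p i ≤ p (i + 1)) → p 0 = 0 →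
      ∑ I ∈ Finset.range (p m), h I
        = ∑ i ∈ Finset.range m, ∑ J ∈ Finset.range (p (i + 1) - p i), h (p i + J) := by
  intro m
  induction m with
  | zero => intro _ hp0; rw [hp0]; simp
  | succ m ih =>
    intro hmono hp0
    have hle : p m ≤ p (m + 1) := hmono m (by omega)
    have e : p (m + 1) = p m + (p (m + 1) - p m) := by omega
    rw [e, Finset.sum_range_add, ih (fun i hi => hmono i (by omega)) hp0,
      Finset.sum_range_succ]

lemma refine {θ C a b η : ℝ} {H : ℝ → ℝ → ℝ} (hθ : 1 < θ) (hC : 0 ≤ C)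
    (hH : ∀ x y z : ℝ, a ≤ x → x ≤ y → y ≤ z → z ≤ b →
      |H x z - H x y - H y z| ≤ C * (z - x) ^ θ)
    {m M : ℕ} {σ σs : ℕ → ℝ} {p : ℕ → ℕ}
    (hσ : IsGrid a b m σ) (hmesh : MeshLE m σ η)
    (hσs : IsGrid a b M σs)
    (hp0 : p 0 = 0) (hpm : p m = M) (hps : ∀ i ≤ m, σs (p i) = σ i)
    (hpM : ∀ i ≤ m, p i ≤ M) :
    |(∑ I ∈ Finset.range M, H (σs I) (σs (I + 1)))
        - ∑ i ∈ Finset.range m, H (σ i) (σ (i + 1))|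
      ≤ C * (2:ℝ) ^ θ * Zc θ * η ^ (θ - 1) * (b - a) := by
  have hpmono : ∀ i < m, p i < p (i + 1) := by
    intro i hi
    by_contra hle
    push_neg at hle
    have h1 : σs (p (i + 1)) ≤ σs (p i) := grid_mono hσs hle (hpM i (by omega))
    rw [hps i (by omega), hps (i + 1) (by omega)] at h1
    exact absurd h1 (not_le.2 (hσ.2.2 i hi))
  have hsplit : ∑ I ∈ Finset.range M, H (σs I) (σs (I + 1))
      = ∑ i ∈ Finset.range m, ∑ J ∈ Finset.range (p (i + 1) - p i),
          H (σs (p i + J)) (σs (p i + J + 1)) := by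
    rw [← hpm]
    exact sum_blocks m (fun i hi => (hpmono i hi).le) hp0
  rw [hsplit, ← Finset.sum_sub_distrib]
  refine (Finset.abs_sum_le_sum_abs _ _).trans ?_
  have key : ∀ i ∈ Finset.range m,
      |(∑ J ∈ Finset.range (p (i + 1) - p i), H (σs (p i + J)) (σs (p i + J + 1)))
        - H (σ i) (σ (i + 1))|
      ≤ C * (2:ℝ) ^ θ * Zc θ * η ^ (θ - 1) * (σ (i + 1) - σ i) := by
    intro i hi
    rw [Finset.mem_range] at hi
    have hai : a ≤ σ i := (grid_mem hσ (by omega)).1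
    have hib : σ (i + 1) ≤ b := (grid_mem hσ (by omega)).2
    have hgrid_i : IsGrid (σ i) (σ (i + 1)) (p (i + 1) - p i) (fun J => σs (p i + J)) := by
      refine ⟨?_, ?_, ?_⟩
      · show σs (p i + 0) = σ i
        rw [Nat.add_zero, hps i (by omega)]
      · show σs (p i + (p (i + 1) - p i)) = σ (i + 1)
        have : p i + (p (i + 1) - p i) = p (i + 1) := by
          have := hpmono i hi; omega
        rw [this, hps (i + 1) (by omega)]
      · intro J hJ
        have h1 : p i + J < p (i + 1) := by
          have := hpmono i hi; omega
        have h2 : p i + J < M := lt_of_lt_of_le h1 (hpM (i + 1) (by omega))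
        exact hσs.2.2 (p i + J) h2
    have hH_i : ∀ x y z : ℝ, σ i ≤ x → x ≤ y → y ≤ z → z ≤ σ (i + 1) →
        |H x z - H x y - H y z| ≤ C * (z - x) ^ θ := fun x y z h1 h2 h3 h4 =>
      hH x y z (le_trans hai h1) h2 h3 (le_trans h4 hib)
    have b_i := asl hθ hC hH_i hgrid_i
    refine b_i.trans ?_
    have hΔpos : 0 < σ (i + 1) - σ i := by linarith [hσ.2.2 i hi]
    have hΔη : σ (i + 1) - σ i ≤ η := hmesh i hi
    have e1 : (2 * (σ (i + 1) - σ i)) ^ θ = (2:ℝ) ^ θ * (σ (i + 1) - σ i) ^ θ :=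
      Real.mul_rpow (by norm_num) hΔpos.le
    have e2 : (σ (i + 1) - σ i) ^ θ = (σ (i + 1) - σ i) ^ (θ - 1) * (σ (i + 1) - σ i) := by
      rw [show θ = (θ - 1) + 1 by ring, Real.rpow_add hΔpos, Real.rpow_one]
      ring_nf
    have e3 : (σ (i + 1) - σ i) ^ (θ - 1) ≤ η ^ (θ - 1) :=
      Real.rpow_le_rpow hΔpos.le hΔη (by linarith)
    calc C * (2 * (σ (i + 1) - σ i)) ^ θ * Zc θ
        = C * (2:ℝ) ^ θ * Zc θ * ((σ (i + 1) - σ i) ^ (θ - 1) * (σ (i + 1) - σ i)) := by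
          rw [e1, ← e2]; ring
      _ ≤ C * (2:ℝ) ^ θ * Zc θ * (η ^ (θ - 1) * (σ (i + 1) - σ i)) := by
          refine mul_le_mul_of_nonneg_left ?_ ?_
          · exact mul_le_mul_of_nonneg_right e3 hΔpos.le
          · have := Zc_nonneg θ
            positivity
      _ = C * (2:ℝ) ^ θ * Zc θ * η ^ (θ - 1) * (σ (i + 1) - σ i) := by ring
  refine (Finset.sum_le_sum key).trans ?_
  rw [← Finset.mul_sum]
  have : ∑ i ∈ Finset.range m, (σ (i + 1) - σ i) = b - a := by
    rw [Finset.sum_range_sub σ m, hσ.1, hσ.2.1]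
  rw [this]

lemma exists_refinement {a b : ℝ} {m m' : ℕ} {σ σ' : ℕ → ℝ}
    (h : IsGrid a b m σ) (h' : IsGrid a b m' σ') :
    ∃ (M : ℕ) (σs : ℕ → ℝ) (p p' : ℕ → ℕ),
      IsGrid a b M σs ∧
      (p 0 = 0 ∧ p m = M ∧ (∀ i ≤ m, σs (p i) = σ i) ∧ (∀ i ≤ m, p i ≤ M)) ∧
      (p' 0 = 0 ∧ p' m' = M ∧ (∀ i ≤ m', σs (p' i) = σ' i) ∧ (∀ i ≤ m', p' i ≤ M)) := by
  classical
  set T : Finset ℝ := (Finset.range (m + 1)).image σ ∪ (Finset.range (m' + 1)).image σ'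
    with hT
  set l : List ℝ := T.sort (· ≤ ·) with hl
  have hmemT : ∀ x, x ∈ l ↔ x ∈ T := fun x => Finset.mem_sort _
  have hmemσ : ∀ i ≤ m, σ i ∈ T := by
    intro i hi
    exact Finset.mem_union_left _ (Finset.mem_image.2 ⟨i, Finset.mem_range.2 (by omega), rfl⟩)
  have hmemσ' : ∀ i ≤ m', σ' i ∈ T := by
    intro i hi
    exact Finset.mem_union_right _ (Finset.mem_image.2 ⟨i, Finset.mem_range.2 (by omega), rfl⟩)
  have hbounds : ∀ x ∈ T, a ≤ x ∧ x ≤ b := by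
    intro x hx
    rw [hT, Finset.mem_union] at hx
    rcases hx with hx | hx
    · obtain ⟨i, hi, rfl⟩ := Finset.mem_image.1 hx
      exact grid_mem h (Nat.lt_succ_iff.1 (Finset.mem_range.1 hi))
    · obtain ⟨i, hi, rfl⟩ := Finset.mem_image.1 hx
      exact grid_mem h' (Nat.lt_succ_iff.1 (Finset.mem_range.1 hi))
  have hsorted : l.SortedLT := Finset.sortedLT_sort T
  have hlen : 0 < l.length := by
    rw [List.length_pos_iff]
    intro hemp
    have : σ 0 ∈ l := (hmemT _).2 (hmemσ 0 (by omega))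
    rw [hemp] at this
    exact absurd this List.not_mem_nil
  set M : ℕ := l.length - 1 with hM
  have hlenM : l.length = M + 1 := by omega
  set σs : ℕ → ℝ := fun i => l.getD i 0 with hσs
  have hget : ∀ {i : ℕ} (hi : i < l.length), σs i = l[i] := by
    intro i hi
    simp only [hσs]
    exact List.getD_eq_getElem l 0 hi
  have hstrict : ∀ {i j : ℕ}, i < j → j < l.length → σs i < σs j := by
    intro i j hij hj
    have hi : i < l.length := lt_trans hij hj
    rw [hget hi, hget hj]
    exact List.SortedLT.strictMono_get hsorted (show (⟨i, hi⟩ : Fin _) < ⟨j, hj⟩ from hij)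
  have hinj : ∀ {i j : ℕ}, i < l.length → j < l.length → σs i = σs j → i = j := by
    intro i j hi hj hij
    rcases lt_trichotomy i j with hlt | heq | hgt
    · exact absurd hij (ne_of_lt (hstrict hlt hj))
    · exact heq
    · exact absurd hij.symm (ne_of_lt (hstrict hgt hi))
  -- endpoints
  have hmem_l : ∀ x ∈ T, ∃ (jx : ℕ) (hjx : jx < l.length), σs jx = x := by
    intro x hx
    obtain ⟨⟨jx, hjx⟩, hjeq⟩ := List.mem_iff_get.1 ((hmemT x).2 hx)
    exact ⟨jx, hjx, by rw [hget hjx]; simpa using hjeq⟩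
  have hs0 : σs 0 = a := by
    obtain ⟨j, hj, hje⟩ := hmem_l a (h.1 ▸ hmemσ 0 (by omega))
    have h1 : σs 0 ≤ σs j := by
      rcases Nat.eq_zero_or_pos j with rfl | hpos
      · exact le_rfl
      · exact (hstrict hpos hj).le
    have h2 : a ≤ σs 0 := by
      have : σs 0 ∈ T := by
        rw [← hmemT, hget hlen]
        exact List.getElem_mem _
      exact (hbounds _ this).1
    rw [hje] at h1
    linarith
  have hsM : σs M = b := by
    have hMlt : M < l.length := by omega
    obtain ⟨j, hj, hje⟩ := hmem_l b (h.2.1 ▸ hmemσ m (by omega))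
    have h1 : σs j ≤ σs M := by
      rcases Nat.eq_or_lt_of_le (Nat.lt_succ_iff.1 (hlenM ▸ hj)) with heq | hlt
      · rw [heq]
      · exact (hstrict hlt hMlt).le
    have h2 : σs M ≤ b := by
      have : σs M ∈ T := by
        rw [← hmemT, hget hMlt]
        exact List.getElem_mem _
      exact (hbounds _ this).2
    rw [hje] at h1
    linarith
  have hgridS : IsGrid a b M σs := by
    refine ⟨hs0, hsM, fun i hi => hstrict (by omega) (by omega)⟩
  -- index maps
  have hidx : ∀ x ∈ T, List.idxOf x l < l.length :=
    fun x hx => List.idxOf_lt_length_iff.2 ((hmemT x).2 hx)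
  have hidx_val : ∀ x (hx : x ∈ T), σs (List.idxOf x l) = x := by
    intro x hx
    rw [hget (hidx x hx)]
    exact List.getElem_idxOf (hidx x hx)
  refine ⟨M, σs, fun i => List.idxOf (σ i) l, fun i => List.idxOf (σ' i) l,
    hgridS, ⟨?_, ?_, ?_, ?_⟩, ⟨?_, ?_, ?_, ?_⟩⟩
  · exact hinj (hidx _ (hmemσ 0 (by omega))) hlen
      (by rw [hidx_val _ (hmemσ 0 (by omega)), h.1, hs0])
  · exact hinj (hidx _ (hmemσ m (by omega))) (by omega)
      (by rw [hidx_val _ (hmemσ m (by omega)), h.2.1, hsM])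
  · exact fun i hi => hidx_val _ (hmemσ i hi)
  · exact fun i hi => by
      have := hidx _ (hmemσ i hi)
      show List.idxOf (σ i) l ≤ M
      omega
  · exact hinj (hidx _ (hmemσ' 0 (by omega))) hlen
      (by rw [hidx_val _ (hmemσ' 0 (by omega)), h'.1, hs0])
  · exact hinj (hidx _ (hmemσ' m' (by omega))) (by omega)
      (by rw [hidx_val _ (hmemσ' m' (by omega)), h'.2.1, hsM])
  · exact fun i hi => hidx_val _ (hmemσ' i hi)
  · exact fun i hi => by
      have := hidx _ (hmemσ' i hi)
      show List.idxOf (σ' i) l ≤ M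
      omega

lemma master {γ₁ γ₂ ρ₁ ρ₂ Cf Cg : ℝ} {f g : ℝ → ℝ → ℝ}
    (hγ₁ : 0 < γ₁) (hγ₂ : 0 < γ₂) (hρ₁ : 0 < ρ₁) (hρ₂ : 0 < ρ₂)
    (hθ₁ : 1 < γ₁ + ρ₁) (hθ₂ : 1 < γ₂ + ρ₂)
    (hCf : 0 ≤ Cf) (hCg : 0 ≤ Cg)
    (hfdd : ∀ s₁ s₂ t₁ t₂ : ℝ, s₁ ∈ Set.Icc (0:ℝ) 1 → s₂ ∈ Set.Icc (0:ℝ) 1 →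
      t₁ ∈ Set.Icc (0:ℝ) 1 → t₂ ∈ Set.Icc (0:ℝ) 1 →
      |dd f s₁ s₂ t₁ t₂| ≤ Cf * |s₂ - s₁| ^ γ₁ * |t₂ - t₁| ^ γ₂)
    (hfd1 : ∀ s₁ s₂ t : ℝ, s₁ ∈ Set.Icc (0:ℝ) 1 → s₂ ∈ Set.Icc (0:ℝ) 1 →
      t ∈ Set.Icc (0:ℝ) 1 → |d1 f s₁ s₂ t| ≤ Cf * |s₂ - s₁| ^ γ₁)
    (hfd2 : ∀ s t₁ t₂ : ℝ, s ∈ Set.Icc (0:ℝ) 1 → t₁ ∈ Set.Icc (0:ℝ) 1 →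
      t₂ ∈ Set.Icc (0:ℝ) 1 → |d2 f s t₁ t₂| ≤ Cf * |t₂ - t₁| ^ γ₂)
    (hgdd : ∀ s₁ s₂ t₁ t₂ : ℝ, s₁ ∈ Set.Icc (0:ℝ) 1 → s₂ ∈ Set.Icc (0:ℝ) 1 →
      t₁ ∈ Set.Icc (0:ℝ) 1 → t₂ ∈ Set.Icc (0:ℝ) 1 →
      |dd g s₁ s₂ t₁ t₂| ≤ Cg * |s₂ - s₁| ^ ρ₁ * |t₂ - t₁| ^ ρ₂)
    {s s' t t' : ℝ} (hs : 0 ≤ s) (hs1 : s' ≤ 1) (ht : 0 ≤ t) (ht1 : t' ≤ 1)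
    {m n m2 n2 : ℕ} {σ τ σ2 τ2 : ℕ → ℝ} {η η2 : ℝ} (hη : 0 ≤ η) (hη2 : 0 ≤ η2)
    (hσ : IsGrid s s' m σ) (hτ : IsGrid t t' n τ)
    (hσ2 : IsGrid s s' m2 σ2) (hτ2 : IsGrid t t' n2 τ2)
    (hmσ : MeshLE m σ η) (hmτ : MeshLE n τ η)
    (hmσ2 : MeshLE m2 σ2 η2) (hmτ2 : MeshLE n2 τ2 η2) :
    |(∑ i ∈ Finset.range m, ∑ j ∈ Finset.range n,
        f (σ i) (τ j) * dd g (σ i) (σ (i + 1)) (τ j) (τ (j + 1)))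
      - (∑ i ∈ Finset.range m2, ∑ j ∈ Finset.range n2,
        f (σ2 i) (τ2 j) * dd g (σ2 i) (σ2 (i + 1)) (τ2 j) (τ2 (j + 1)))|
    ≤ ((Cf * Cg * ((2:ℝ) ^ (γ₂ + ρ₂) * Zc (γ₂ + ρ₂) + 1)) * (2:ℝ) ^ (γ₁ + ρ₁) * Zc (γ₁ + ρ₁)
          * η ^ (γ₁ + ρ₁ - 1)
        + (Cf * Cg * ((2:ℝ) ^ (γ₁ + ρ₁) * Zc (γ₁ + ρ₁) + 1)) * (2:ℝ) ^ (γ₂ + ρ₂) * Zc (γ₂ + ρ₂)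
          * η ^ (γ₂ + ρ₂ - 1))
      + ((Cf * Cg * ((2:ℝ) ^ (γ₂ + ρ₂) * Zc (γ₂ + ρ₂) + 1)) * (2:ℝ) ^ (γ₁ + ρ₁) * Zc (γ₁ + ρ₁)
          * η2 ^ (γ₁ + ρ₁ - 1)
        + (Cf * Cg * ((2:ℝ) ^ (γ₁ + ρ₁) * Zc (γ₁ + ρ₁) + 1)) * (2:ℝ) ^ (γ₂ + ρ₂) * Zc (γ₂ + ρ₂)
          * η2 ^ (γ₂ + ρ₂ - 1)) := by
  obtain ⟨M, σs, p, p2, hσs, hp, hp2⟩ := exists_refinement hσ hσ2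
  obtain ⟨N, τs, q, q2, hτs, hq, hq2⟩ := exists_refinement hτ hτ2
  set C₁ : ℝ := Cf * Cg * ((2:ℝ) ^ (γ₂ + ρ₂) * Zc (γ₂ + ρ₂) + 1) with hC₁def
  set C₂ : ℝ := Cf * Cg * ((2:ℝ) ^ (γ₁ + ρ₁) * Zc (γ₁ + ρ₁) + 1) with hC₂def
  have hZ1 := Zc_nonneg (γ₁ + ρ₁)
  have hZ2 := Zc_nonneg (γ₂ + ρ₂)
  have hC₁ : 0 ≤ C₁ := by
    have h2 : (0:ℝ) ≤ (2:ℝ) ^ (γ₂ + ρ₂) := by positivity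
    have := mul_nonneg h2 hZ2
    exact mul_nonneg (mul_nonneg hCf hCg) (by linarith)
  have hC₂ : 0 ≤ C₂ := by
    have h2 : (0:ℝ) ≤ (2:ℝ) ^ (γ₁ + ρ₁) := by positivity
    have := mul_nonneg h2 hZ1
    exact mul_nonneg (mul_nonneg hCf hCg) (by linarith)
  have hss' : s ≤ s' := grid_le hσ
  have htt' : t ≤ t' := grid_le hτ
  -- transposed Hölder bounds
  have hfddT : ∀ s₁ s₂ t₁ t₂ : ℝ, s₁ ∈ Set.Icc (0:ℝ) 1 → s₂ ∈ Set.Icc (0:ℝ) 1 →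
      t₁ ∈ Set.Icc (0:ℝ) 1 → t₂ ∈ Set.Icc (0:ℝ) 1 →
      |dd (fun u v => f v u) s₁ s₂ t₁ t₂| ≤ Cf * |s₂ - s₁| ^ γ₂ * |t₂ - t₁| ^ γ₁ := by
    intro s₁ s₂ t₁ t₂ h1 h2 h3 h4
    have e : dd (fun u v => f v u) s₁ s₂ t₁ t₂ = dd f t₁ t₂ s₁ s₂ := by
      simp only [dd]; ring
    rw [e]
    calc |dd f t₁ t₂ s₁ s₂| ≤ Cf * |t₂ - t₁| ^ γ₁ * |s₂ - s₁| ^ γ₂ := hfdd t₁ t₂ s₁ s₂ h3 h4 h1 h2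
      _ = Cf * |s₂ - s₁| ^ γ₂ * |t₂ - t₁| ^ γ₁ := by ring
  have hfd1T : ∀ s₁ s₂ u : ℝ, s₁ ∈ Set.Icc (0:ℝ) 1 → s₂ ∈ Set.Icc (0:ℝ) 1 →
      u ∈ Set.Icc (0:ℝ) 1 → |d1 (fun u v => f v u) s₁ s₂ u| ≤ Cf * |s₂ - s₁| ^ γ₂ := by
    intro s₁ s₂ u h1 h2 h3
    have e : d1 (fun u v => f v u) s₁ s₂ u = d2 f u s₁ s₂ := by simp only [d1, d2]
    rw [e]
    exact hfd2 u s₁ s₂ h3 h1 h2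
  have hgddT : ∀ s₁ s₂ t₁ t₂ : ℝ, s₁ ∈ Set.Icc (0:ℝ) 1 → s₂ ∈ Set.Icc (0:ℝ) 1 →
      t₁ ∈ Set.Icc (0:ℝ) 1 → t₂ ∈ Set.Icc (0:ℝ) 1 →
      |dd (fun u v => g v u) s₁ s₂ t₁ t₂| ≤ Cg * |s₂ - s₁| ^ ρ₂ * |t₂ - t₁| ^ ρ₁ := by
    intro s₁ s₂ t₁ t₂ h1 h2 h3 h4
    have e : dd (fun u v => g v u) s₁ s₂ t₁ t₂ = dd g t₁ t₂ s₁ s₂ := by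
      simp only [dd]; ring
    rw [e]
    calc |dd g t₁ t₂ s₁ s₂| ≤ Cg * |t₂ - t₁| ^ ρ₁ * |s₂ - s₁| ^ ρ₂ := hgdd t₁ t₂ s₁ s₂ h3 h4 h1 h2
      _ = Cg * |s₂ - s₁| ^ ρ₂ * |t₂ - t₁| ^ ρ₁ := by ring
  -- generic half estimate
  have half : ∀ (m0 n0 : ℕ) (σ0 τ0 : ℕ → ℝ) (p0 q0 : ℕ → ℕ) (η0 : ℝ), 0 ≤ η0 →
      IsGrid s s' m0 σ0 → IsGrid t t' n0 τ0 → MeshLE m0 σ0 η0 → MeshLE n0 τ0 η0 →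
      p0 0 = 0 → p0 m0 = M → (∀ i ≤ m0, σs (p0 i) = σ0 i) → (∀ i ≤ m0, p0 i ≤ M) →
      q0 0 = 0 → q0 n0 = N → (∀ j ≤ n0, τs (q0 j) = τ0 j) → (∀ j ≤ n0, q0 j ≤ N) →
      |(∑ i ∈ Finset.range m0, ∑ j ∈ Finset.range n0,
          f (σ0 i) (τ0 j) * dd g (σ0 i) (σ0 (i + 1)) (τ0 j) (τ0 (j + 1)))
        - (∑ I ∈ Finset.range M, ∑ J ∈ Finset.range N,
          f (σs I) (τs J) * dd g (σs I) (σs (I + 1)) (τs J) (τs (J + 1)))|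
      ≤ C₁ * (2:ℝ) ^ (γ₁ + ρ₁) * Zc (γ₁ + ρ₁) * η0 ^ (γ₁ + ρ₁ - 1)
        + C₂ * (2:ℝ) ^ (γ₂ + ρ₂) * Zc (γ₂ + ρ₂) * η0 ^ (γ₂ + ρ₂ - 1) := by
    intro m0 n0 σ0 τ0 p0 q0 η0 hη0 hσ0 hτ0 hmσ0 hmτ0 hp00 hp0m hp0s hp0M hq00 hq0n hq0s hq0N
    -- step 1 : refine in the s-direction with fixed τ0-grid
    set H1 : ℝ → ℝ → ℝ := fun x y =>
      ∑ j ∈ Finset.range n0, f x (τ0 j) * dd g x y (τ0 j) (τ0 (j + 1)) with hH1def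
    have hH1 : ∀ x y z : ℝ, s ≤ x → x ≤ y → y ≤ z → z ≤ s' →
        |H1 x z - H1 x y - H1 y z| ≤ C₁ * (z - x) ^ (γ₁ + ρ₁) := by
      intro x y z h1 h2 h3 h4
      exact stage1 hγ₁ hγ₂ hρ₁ hρ₂ hθ₂ hCf hCg hfdd hfd1 hgdd ht ht1 hτ0
        (by linarith) h2 h3 (by linarith)
    have step1 := refine hH1 (hσ := hσ0) (hmesh := hmσ0) (hσs := hσs)
      hp00 hp0m hp0s hp0M (hθ := hθ₁) (hC := hC₁)
    -- step 2 : refine in the t-direction with fixed σs-grid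
    set H2 : ℝ → ℝ → ℝ := fun u v =>
      ∑ I ∈ Finset.range M, f (σs I) u * dd g (σs I) (σs (I + 1)) u v with hH2def
    have hH2 : ∀ u v w : ℝ, t ≤ u → u ≤ v → v ≤ w → w ≤ t' →
        |H2 u w - H2 u v - H2 v w| ≤ C₂ * (w - u) ^ (γ₂ + ρ₂) := by
      intro u v w h1 h2 h3 h4
      have key := stage1 (f := fun u v => f v u) (g := fun u v => g v u)
        hγ₂ hγ₁ hρ₂ hρ₁ hθ₁ hCf hCg hfddT hfd1T hgddT hs hs1 hσs
        (by linarith) h2 h3 (by linarith)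
      have conv : ∀ (u v : ℝ),
          (∑ I ∈ Finset.range M, f (σs I) u * dd g (σs I) (σs (I + 1)) u v)
            = ∑ I ∈ Finset.range M, (fun u v => f v u) u (σs I)
              * dd (fun u v => g v u) u v (σs I) (σs (I + 1)) := by
        intro u v
        refine Finset.sum_congr rfl fun I _ => ?_
        simp only [dd]
        ring
      simp only [hH2def]
      rw [conv u w, conv u v, conv v w]
      exact key
    have step2 := refine hH2 (hσ := hτ0) (hmesh := hmτ0) (hσs := hτs)
      hq00 hq0n hq0s hq0N (hθ := hθ₂) (hC := hC₂)
    -- identify the sums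
    have e1 : ∑ i ∈ Finset.range m0, H1 (σ0 i) (σ0 (i + 1))
        = ∑ i ∈ Finset.range m0, ∑ j ∈ Finset.range n0,
            f (σ0 i) (τ0 j) * dd g (σ0 i) (σ0 (i + 1)) (τ0 j) (τ0 (j + 1)) := rfl
    have e2 : ∑ I ∈ Finset.range M, H1 (σs I) (σs (I + 1))
        = ∑ j ∈ Finset.range n0, H2 (τ0 j) (τ0 (j + 1)) := by
      simp only [hH1def, hH2def]
      exact Finset.sum_comm
    have e3 : ∑ J ∈ Finset.range N, H2 (τs J) (τs (J + 1))
        = ∑ I ∈ Finset.range M, ∑ J ∈ Finset.range N,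
            f (σs I) (τs J) * dd g (σs I) (σs (I + 1)) (τs J) (τs (J + 1)) := by
      simp only [hH2def]
      exact Finset.sum_comm
    rw [e1] at step1
    rw [e3] at step2
    have tri : |(∑ i ∈ Finset.range m0, ∑ j ∈ Finset.range n0,
          f (σ0 i) (τ0 j) * dd g (σ0 i) (σ0 (i + 1)) (τ0 j) (τ0 (j + 1)))
        - (∑ I ∈ Finset.range M, ∑ J ∈ Finset.range N,
          f (σs I) (τs J) * dd g (σs I) (σs (I + 1)) (τs J) (τs (J + 1)))|
        ≤ C₁ * (2:ℝ) ^ (γ₁ + ρ₁) * Zc (γ₁ + ρ₁) * η0 ^ (γ₁ + ρ₁ - 1) * (s' - s)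
          + C₂ * (2:ℝ) ^ (γ₂ + ρ₂) * Zc (γ₂ + ρ₂) * η0 ^ (γ₂ + ρ₂ - 1) * (t' - t) := by
      have tineq := abs_sub_le
        (∑ i ∈ Finset.range m0, ∑ j ∈ Finset.range n0,
          f (σ0 i) (τ0 j) * dd g (σ0 i) (σ0 (i + 1)) (τ0 j) (τ0 (j + 1)))
        (∑ I ∈ Finset.range M, H1 (σs I) (σs (I + 1)))
        (∑ I ∈ Finset.range M, ∑ J ∈ Finset.range N,
          f (σs I) (τs J) * dd g (σs I) (σs (I + 1)) (τs J) (τs (J + 1)))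
      refine tineq.trans (add_le_add ?_ ?_)
      · rw [abs_sub_comm]
        exact step1
      · rw [e2, abs_sub_comm]
        exact step2
    refine tri.trans ?_
    have f1 : C₁ * (2:ℝ) ^ (γ₁ + ρ₁) * Zc (γ₁ + ρ₁) * η0 ^ (γ₁ + ρ₁ - 1) * (s' - s)
        ≤ C₁ * (2:ℝ) ^ (γ₁ + ρ₁) * Zc (γ₁ + ρ₁) * η0 ^ (γ₁ + ρ₁ - 1) := by
      have hnn : 0 ≤ C₁ * (2:ℝ) ^ (γ₁ + ρ₁) * Zc (γ₁ + ρ₁) * η0 ^ (γ₁ + ρ₁ - 1) := by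
        have := Real.rpow_nonneg hη0 (γ₁ + ρ₁ - 1)
        have h2 : (0:ℝ) ≤ (2:ℝ) ^ (γ₁ + ρ₁) := by positivity
        exact mul_nonneg (mul_nonneg (mul_nonneg hC₁ h2) hZ1) this
      nlinarith [hnn]
    have f2 : C₂ * (2:ℝ) ^ (γ₂ + ρ₂) * Zc (γ₂ + ρ₂) * η0 ^ (γ₂ + ρ₂ - 1) * (t' - t)
        ≤ C₂ * (2:ℝ) ^ (γ₂ + ρ₂) * Zc (γ₂ + ρ₂) * η0 ^ (γ₂ + ρ₂ - 1) := by
      have hnn : 0 ≤ C₂ * (2:ℝ) ^ (γ₂ + ρ₂) * Zc (γ₂ + ρ₂) * η0 ^ (γ₂ + ρ₂ - 1) := by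
        have := Real.rpow_nonneg hη0 (γ₂ + ρ₂ - 1)
        have h2 : (0:ℝ) ≤ (2:ℝ) ^ (γ₂ + ρ₂) := by positivity
        exact mul_nonneg (mul_nonneg (mul_nonneg hC₂ h2) hZ2) this
      nlinarith [hnn]
    exact add_le_add f1 f2
  have half1 := half m n σ τ p q η hη hσ hτ hmσ hmτ
    hp.1 hp.2.1 hp.2.2.1 hp.2.2.2 hq.1 hq.2.1 hq.2.2.1 hq.2.2.2
  have half2 := half m2 n2 σ2 τ2 p2 q2 η2 hη2 hσ2 hτ2 hmσ2 hmτ2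
    hp2.1 hp2.2.1 hp2.2.2.1 hp2.2.2.2 hq2.1 hq2.2.1 hq2.2.2.1 hq2.2.2.2
  have tineq := abs_sub_le
    (∑ i ∈ Finset.range m, ∑ j ∈ Finset.range n,
      f (σ i) (τ j) * dd g (σ i) (σ (i + 1)) (τ j) (τ (j + 1)))
    (∑ I ∈ Finset.range M, ∑ J ∈ Finset.range N,
      f (σs I) (τs J) * dd g (σs I) (σs (I + 1)) (τs J) (τs (J + 1)))
    (∑ i ∈ Finset.range m2, ∑ j ∈ Finset.range n2,
      f (σ2 i) (τ2 j) * dd g (σ2 i) (σ2 (i + 1)) (τ2 j) (τ2 (j + 1)))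
  refine tineq.trans (add_le_add half1 ?_)
  rw [abs_sub_comm]
  exact half2

lemma Esmall {D a : ℝ} (hD : 0 ≤ D) (ha : 0 < a) {ε : ℝ} (hε : 0 < ε) :
    ∃ η > (0:ℝ), ∀ x : ℝ, 0 < x → x ≤ η → D * x ^ a ≤ ε := by
  refine ⟨(ε / (D + 1)) ^ (1 / a), by positivity, ?_⟩
  intro x hx hxe
  have h2 : ((ε / (D + 1)) ^ (1 / a)) ^ a = ε / (D + 1) := by
    rw [← Real.rpow_mul (by positivity), one_div, inv_mul_cancel₀ ha.ne', Real.rpow_one]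
  have h1 : x ^ a ≤ ε / (D + 1) := h2 ▸ Real.rpow_le_rpow hx.le hxe ha.le
  have h3 : D * x ^ a ≤ D * (ε / (D + 1)) := mul_le_mul_of_nonneg_left h1 hD
  have h4 : D * (ε / (D + 1)) ≤ ε := by
    rw [mul_div_assoc']
    rw [div_le_iff₀ (by positivity)]
    nlinarith
  linarith


end YoungAux

/-- **Two-dimensional Young integral.**
For `γᵢ + ρᵢ > 1` and `f, g` continuous on `[0,1]²` with finite Hölder norms
`𝒩_{γ₁,γ₂}(f)`, `𝒩_{ρ₁,ρ₂}(g)`, the two-dimensional Young Riemann sums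
`Σ f(σᵢ,τⱼ)(δg)(σᵢ,σᵢ₊₁;τⱼ,τⱼ₊₁)` converge on every rectangle of `[0,1]²`. -/
theorem stmt1
    (γ₁ γ₂ ρ₁ ρ₂ : ℝ)
    (hγ₁ : γ₁ ∈ Set.Ioc (0:ℝ) 1) (hγ₂ : γ₂ ∈ Set.Ioc (0:ℝ) 1)
    (hρ₁ : ρ₁ ∈ Set.Ioc (0:ℝ) 1) (hρ₂ : ρ₂ ∈ Set.Ioc (0:ℝ) 1)
    (h1 : 1 < γ₁ + ρ₁) (h2 : 1 < γ₂ + ρ₂)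
    (f g : ℝ → ℝ → ℝ)
    (hfc : ContinuousOn (fun q : ℝ × ℝ => f q.1 q.2) (Icc 0 1 ×ˢ Icc 0 1))
    (hgc : ContinuousOn (fun q : ℝ × ℝ => g q.1 q.2) (Icc 0 1 ×ˢ Icc 0 1))
    (hfN : NFin γ₁ γ₂ f) (hgN : NFin ρ₁ ρ₂ g)
    (s s' t t' : ℝ) (hs : 0 ≤ s) (hss' : s ≤ s') (hs' : s' ≤ 1)
    (ht : 0 ≤ t) (htt' : t ≤ t') (ht' : t' ≤ 1) :
    ∃ L : ℝ, RConv s s' t t' (fun a b c d => f a c * dd g a b c d) L := by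
  obtain ⟨Cf, hfdd, hfd1, hfd2, hfsup⟩ := hfN
  obtain ⟨Cg, hgdd, hgd1, hgd2, hgsup⟩ := hgN
  have hCf : 0 ≤ Cf := le_trans (abs_nonneg _)
    (hfsup 0 0 ⟨le_rfl, zero_le_one⟩ ⟨le_rfl, zero_le_one⟩)
  have hCg : 0 ≤ Cg := le_trans (abs_nonneg _)
    (hgsup 0 0 ⟨le_rfl, zero_le_one⟩ ⟨le_rfl, zero_le_one⟩)
  obtain ⟨hγ₁0, hγ₁1⟩ := hγ₁
  obtain ⟨hγ₂0, hγ₂1⟩ := hγ₂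
  obtain ⟨hρ₁0, hρ₁1⟩ := hρ₁
  obtain ⟨hρ₂0, hρ₂1⟩ := hρ₂
  -- degenerate cases
  rcases eq_or_lt_of_le hss' with hdeg | hsslt
  · refine ⟨0, fun ε hε => ⟨1, one_pos, ?_⟩⟩
    intro m n σ τ hσ hτ _ _
    have hm : m = 0 := by
      by_contra hm0
      have h01 : σ 0 < σ m :=
        lt_of_lt_of_le (hσ.2.2 0 (by omega)) (grid_mono hσ (by omega) le_rfl)
      rw [hσ.1, hσ.2.1, ← hdeg] at h01
      exact lt_irrefl s h01
    rw [hm]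
    simp only [Finset.range_zero, Finset.sum_empty, zero_sub, abs_neg, abs_zero]
    linarith
  rcases eq_or_lt_of_le htt' with hdeg | httlt
  · refine ⟨0, fun ε hε => ⟨1, one_pos, ?_⟩⟩
    intro m n σ τ hσ hτ _ _
    have hn : n = 0 := by
      by_contra hn0
      have h01 : τ 0 < τ n :=
        lt_of_lt_of_le (hτ.2.2 0 (by omega)) (grid_mono hτ (by omega) le_rfl)
      rw [hτ.1, hτ.2.1, ← hdeg] at h01
      exact lt_irrefl t h01
    rw [hn]
    simp only [Finset.range_zero, Finset.sum_empty, Finset.sum_const_zero, zero_sub,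
      abs_neg, abs_zero]
    linarith
  -- main case
  set D₁ : ℝ := (Cf * Cg * ((2:ℝ) ^ (γ₂ + ρ₂) * Zc (γ₂ + ρ₂) + 1)) * (2:ℝ) ^ (γ₁ + ρ₁)
    * Zc (γ₁ + ρ₁) with hD₁def
  set D₂ : ℝ := (Cf * Cg * ((2:ℝ) ^ (γ₁ + ρ₁) * Zc (γ₁ + ρ₁) + 1)) * (2:ℝ) ^ (γ₂ + ρ₂)
    * Zc (γ₂ + ρ₂) with hD₂def
  have hZ1 := Zc_nonneg (γ₁ + ρ₁)
  have hZ2 := Zc_nonneg (γ₂ + ρ₂)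
  have hD₁ : 0 ≤ D₁ := by
    have h2a : (0:ℝ) ≤ (2:ℝ) ^ (γ₂ + ρ₂) := by positivity
    have h2b : (0:ℝ) ≤ (2:ℝ) ^ (γ₁ + ρ₁) := by positivity
    have := mul_nonneg h2a hZ2
    exact mul_nonneg (mul_nonneg (mul_nonneg (mul_nonneg hCf hCg) (by linarith)) h2b) hZ1
  have hD₂ : 0 ≤ D₂ := by
    have h2a : (0:ℝ) ≤ (2:ℝ) ^ (γ₂ + ρ₂) := by positivity
    have h2b : (0:ℝ) ≤ (2:ℝ) ^ (γ₁ + ρ₁) := by positivity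
    have := mul_nonneg h2b hZ1
    exact mul_nonneg (mul_nonneg (mul_nonneg (mul_nonneg hCf hCg) (by linarith)) h2a) hZ2
  have hEsmall : ∀ ε : ℝ, 0 < ε → ∃ η > (0:ℝ), ∀ x : ℝ, 0 < x → x ≤ η →
      D₁ * x ^ (γ₁ + ρ₁ - 1) + D₂ * x ^ (γ₂ + ρ₂ - 1) ≤ ε := by
    intro ε hε
    obtain ⟨a1, ha1, hs1'⟩ := Esmall hD₁ (show (0:ℝ) < γ₁ + ρ₁ - 1 by linarith) (half_pos hε)
    obtain ⟨a2, ha2, hs2'⟩ := Esmall hD₂ (show (0:ℝ) < γ₂ + ρ₂ - 1 by linarith) (half_pos hε)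
    refine ⟨min a1 a2, lt_min ha1 ha2, fun x hx hxm => ?_⟩
    have e1 := hs1' x hx (le_trans hxm (min_le_left _ _))
    have e2 := hs2' x hx (le_trans hxm (min_le_right _ _))
    linarith
  -- uniform grids
  set uσ : ℕ → ℕ → ℝ := fun K i => s + (i : ℝ) * ((s' - s) / (K : ℝ)) with huσdef
  set uτ : ℕ → ℕ → ℝ := fun K i => t + (i : ℝ) * ((t' - t) / (K : ℝ)) with huτdef
  have huσ : ∀ K : ℕ, 0 < K → IsGrid s s' K (uσ K) := by
    intro K hK
    refine ⟨by simp [huσdef], ?_, ?_⟩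
    · have hKne : (K:ℝ) ≠ 0 := by positivity
      simp only [huσdef]
      field_simp
      ring
    · intro i hi
      have hpos : 0 < (s' - s) / (K:ℝ) := div_pos (by linarith) (by positivity)
      have e : uσ K (i + 1) - uσ K i = (s' - s) / K := by
        simp only [huσdef]
        push_cast
        ring
      have h' : 0 < uσ K (i + 1) - uσ K i := by rw [e]; exact hpos
      exact sub_pos.mp h'
  have huτ : ∀ K : ℕ, 0 < K → IsGrid t t' K (uτ K) := by
    intro K hK
    refine ⟨by simp [huτdef], ?_, ?_⟩
    · have hKne : (K:ℝ) ≠ 0 := by positivity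
      simp only [huτdef]
      field_simp
      ring
    · intro i hi
      have hpos : 0 < (t' - t) / (K:ℝ) := div_pos (by linarith) (by positivity)
      have e : uτ K (i + 1) - uτ K i = (t' - t) / K := by
        simp only [huτdef]
        push_cast
        ring
      have h' : 0 < uτ K (i + 1) - uτ K i := by rw [e]; exact hpos
      exact sub_pos.mp h'
  have humσ : ∀ K : ℕ, 0 < K → MeshLE K (uσ K) (1 / (K:ℝ)) := by
    intro K hK i hi
    have hKpos : (0:ℝ) < K := by positivity
    have e : uσ K (i + 1) - uσ K i = (s' - s) / K := by
      simp only [huσdef]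
      push_cast
      ring
    rw [e]
    exact (div_le_div_iff_of_pos_right hKpos).2 (by linarith)
  have humτ : ∀ K : ℕ, 0 < K → MeshLE K (uτ K) (1 / (K:ℝ)) := by
    intro K hK i hi
    have hKpos : (0:ℝ) < K := by positivity
    have e : uτ K (i + 1) - uτ K i = (t' - t) / K := by
      simp only [huτdef]
      push_cast
      ring
    rw [e]
    exact (div_le_div_iff_of_pos_right hKpos).2 (by linarith)
  -- the sequence of uniform Riemann sums
  set A : ℕ → ℝ := fun k =>
    ∑ i ∈ Finset.range (k + 1), ∑ j ∈ Finset.range (k + 1),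
      f (uσ (k + 1) i) (uτ (k + 1) j)
        * dd g (uσ (k + 1) i) (uσ (k + 1) (i + 1)) (uτ (k + 1) j) (uτ (k + 1) (j + 1))
    with hAdef
  have hcast : ∀ k : ℕ, (1:ℝ) / ((k:ℝ) + 1) = 1 / ((k + 1 : ℕ) : ℝ) := by
    intro k
    push_cast
    ring
  have hAdiff : ∀ k l : ℕ,
      |A k - A l| ≤ (D₁ * ((1:ℝ) / ((k:ℝ) + 1)) ^ (γ₁ + ρ₁ - 1)
          + D₂ * ((1:ℝ) / ((k:ℝ) + 1)) ^ (γ₂ + ρ₂ - 1))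
        + (D₁ * ((1:ℝ) / ((l:ℝ) + 1)) ^ (γ₁ + ρ₁ - 1)
          + D₂ * ((1:ℝ) / ((l:ℝ) + 1)) ^ (γ₂ + ρ₂ - 1)) := by
    intro k l
    rw [hcast k, hcast l]
    exact master hγ₁0 hγ₂0 hρ₁0 hρ₂0 h1 h2 hCf hCg hfdd hfd1 hfd2 hgdd hs hs' ht ht'
      (by positivity) (by positivity)
      (huσ (k + 1) (by omega)) (huτ (k + 1) (by omega))
      (huσ (l + 1) (by omega)) (huτ (l + 1) (by omega))
      (humσ (k + 1) (by omega)) (humτ (k + 1) (by omega))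
      (humσ (l + 1) (by omega)) (humτ (l + 1) (by omega))
  have hsmall_seq : ∀ (η₀ : ℝ), 0 < η₀ → ∀ K : ℕ, (1:ℝ)/η₀ < K → ∀ j : ℕ, K ≤ j →
      (1:ℝ)/((j:ℝ)+1) ≤ η₀ := by
    intro η₀ hη₀ K hK j hj
    have hcastle : (K:ℝ) ≤ (j:ℝ) := Nat.cast_le.2 hj
    have h1 : (1:ℝ)/η₀ < (j:ℝ) + 1 := by linarith
    rw [div_lt_iff₀ hη₀] at h1
    rw [div_le_iff₀ (by positivity : (0:ℝ) < (j:ℝ)+1)]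
    nlinarith
  have hconv : ∃ L : ℝ, Filter.Tendsto A Filter.atTop (nhds L) := by
    apply cauchySeq_tendsto_of_complete
    rw [Metric.cauchySeq_iff]
    intro ε hε
    obtain ⟨η₀, hη₀, hsm⟩ := hEsmall (ε / 3) (by linarith)
    obtain ⟨K, hK⟩ := exists_nat_gt (1 / η₀)
    refine ⟨K, fun k hk l hl => ?_⟩
    have hb : ∀ j : ℕ, K ≤ j →
        D₁ * ((1:ℝ)/((j:ℝ)+1)) ^ (γ₁ + ρ₁ - 1) + D₂ * ((1:ℝ)/((j:ℝ)+1)) ^ (γ₂ + ρ₂ - 1)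
          ≤ ε / 3 := by
      intro j hj
      exact hsm _ (by positivity) (hsmall_seq η₀ hη₀ K hK j hj)
    rw [Real.dist_eq]
    calc |A k - A l| ≤ _ := hAdiff k l
      _ ≤ ε/3 + ε/3 := add_le_add (hb k hk) (hb l hl)
      _ < ε := by linarith
  obtain ⟨L, hL⟩ := hconv
  refine ⟨L, ?_⟩
  intro ε hε
  obtain ⟨η₀, hη₀, hsm⟩ := hEsmall (ε / 3) (by linarith)
  obtain ⟨N1, hN1⟩ := Metric.tendsto_atTop.1 hL (ε/3) (by linarith)
  obtain ⟨K, hK⟩ := exists_nat_gt (1 / η₀)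
  set k := max N1 K with hkdef
  refine ⟨η₀, hη₀, ?_⟩
  intro m n σ τ hσ hτ hmσ hmτ
  have hmm := master hγ₁0 hγ₂0 hρ₁0 hρ₂0 h1 h2 hCf hCg hfdd hfd1 hfd2 hgdd hs hs' ht ht'
    (le_of_lt hη₀) (by positivity : (0:ℝ) ≤ 1/(((k+1:ℕ)):ℝ))
    hσ hτ (huσ (k+1) (by omega)) (huτ (k+1) (by omega))
    hmσ hmτ (humσ (k+1) (by omega)) (humτ (k+1) (by omega))
  have hE1 : D₁ * η₀ ^ (γ₁ + ρ₁ - 1) + D₂ * η₀ ^ (γ₂ + ρ₂ - 1) ≤ ε/3 :=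
    hsm η₀ hη₀ le_rfl
  have hE2 : D₁ * ((1:ℝ)/(((k+1:ℕ)):ℝ)) ^ (γ₁ + ρ₁ - 1)
      + D₂ * ((1:ℝ)/(((k+1:ℕ)):ℝ)) ^ (γ₂ + ρ₂ - 1) ≤ ε/3 := by
    rw [← hcast k]
    exact hsm _ (by positivity) (hsmall_seq η₀ hη₀ K hK k (le_max_right _ _))
  have hAL : |A k - L| < ε/3 := by
    have := hN1 k (le_max_left _ _)
    rwa [Real.dist_eq] at this
  have hAk : A k = ∑ i ∈ Finset.range (k + 1), ∑ j ∈ Finset.range (k + 1),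
      f (uσ (k + 1) i) (uτ (k + 1) j)
        * dd g (uσ (k + 1) i) (uσ (k + 1) (i + 1)) (uτ (k + 1) j) (uτ (k + 1) (j + 1)) := by
    rw [hAdef]
  simp only []
  have tri := abs_sub_le
    (∑ i ∈ Finset.range m, ∑ j ∈ Finset.range n,
      f (σ i) (τ j) * dd g (σ i) (σ (i + 1)) (τ j) (τ (j + 1)))
    (A k) L
  rw [hAk] at tri
  refine tri.trans ?_
  have step := hmm.trans (add_le_add hE1 hE2)
  rw [hAk] at hAL
  linarith [step, hAL]
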